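/- Let X be a random variable such that (1/σ²)X follows a chi-squared distribution with p degrees of freedom, σ > 0. Then for every x > 0, P(X ≥ σ²·p·(1 + 2√(x/p) + 2x/p)) ≤ e^{-x}. -/

import Mathlib

open Finset MeasureTheory ProbabilityTheory
open scoped BigOperators ENNReal

/-- The chi-squared distribution with `p` degrees of freedom, realized as the
law of the sum of squares of `p` independent standard Gaussians. -/
noncomputable def chiSquared (p : ℕ) : Measure ℝ :=
  Measure.map (fun g : Fin p → ℝ => ∑ i, (g i) ^ 2)
    (Measure.pi fun _ : Fin p => gaussianReal 0 1)

open scoped NNReal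

lemma lm_log_le {y : ℝ} (hy : 1 ≤ y) : Real.log y ≤ (y - y⁻¹) / 2 := by
  set f : ℝ → ℝ := fun z => (z - z⁻¹) / 2 - Real.log z with hfdef
  have hderiv : ∀ z : ℝ, 1 < z →
      HasDerivAt f ((1 - -(z ^ 2)⁻¹) / 2 - z⁻¹) z := by
    intro z hz
    have hz0 : z ≠ 0 := by nlinarith
    exact (((hasDerivAt_id z).sub (hasDerivAt_inv hz0)).div_const 2).sub
      (Real.hasDerivAt_log hz0)
  have hsub : Set.Ici (1:ℝ) ⊆ {0}ᶜ := by
    intro z hz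
    simp only [Set.mem_compl_iff, Set.mem_singleton_iff]
    intro h
    rw [Set.mem_Ici, h] at hz
    norm_num at hz
  have hc : ContinuousOn f (Set.Ici 1) :=
    ((continuousOn_id.sub (continuousOn_inv₀.mono hsub)).div_const 2).sub
      (Real.continuousOn_log.mono hsub)
  have hmono : MonotoneOn f (Set.Ici 1) := by
    apply monotoneOn_of_deriv_nonneg (convex_Ici 1) hc
    · intro z hz
      rw [interior_Ici] at hz
      exact ((hderiv z hz).differentiableAt).differentiableWithinAt
    · intro z hz
      rw [interior_Ici] at hz
      rw [(hderiv z hz).deriv]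
      have hz0 : (0:ℝ) < z := lt_trans one_pos hz
      have heq : (1 - -(z ^ 2)⁻¹) / 2 - z⁻¹ = (1 - z⁻¹) ^ 2 / 2 := by
        field_simp
        ring
      rw [heq]
      positivity
  have h1 : f 1 ≤ f y := hmono Set.self_mem_Ici hy hy
  have hf1 : f 1 = 0 := by simp [hfdef]
  rw [hf1] at h1
  simp only [hfdef] at h1
  linarith

lemma lm_gauss_integrable {t : ℝ} (ht : t < 1/2) :
    Integrable (fun y => Real.exp (t * y ^ 2)) (gaussianReal 0 1) := by
  rw [gaussianReal_of_var_ne_zero 0 one_ne_zero,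
    integrable_withDensity_iff (measurable_gaussianPDF 0 1)
      (ae_of_all _ fun x => ENNReal.ofReal_lt_top)]
  have heq : (fun x : ℝ => Real.exp (t * x ^ 2) * (gaussianPDF 0 1 x).toReal)
      = fun x => (Real.sqrt (2 * Real.pi))⁻¹ * Real.exp (-(1/2 - t) * x ^ 2) := by
    ext x
    rw [gaussianPDF, ENNReal.toReal_ofReal (gaussianPDFReal_nonneg _ _ _), gaussianPDFReal]
    push_cast
    rw [mul_comm, mul_assoc, ← Real.exp_add]
    ring_nf
  rw [heq]
  exact (integrable_exp_neg_mul_sq (by linarith)).const_mul _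

lemma lm_gauss_integral {t : ℝ} (ht : t < 1/2) :
    ∫ y, Real.exp (t * y ^ 2) ∂(gaussianReal 0 1) = (Real.sqrt (1 - 2 * t))⁻¹ := by
  rw [gaussianReal_of_var_ne_zero 0 one_ne_zero]
  have hpdf : gaussianPDF 0 1 = fun x => (((gaussianPDFReal 0 1 x).toNNReal : ℝ≥0) : ℝ≥0∞) := rfl
  rw [hpdf, integral_withDensity_eq_integral_smul (measurable_gaussianPDFReal 0 1).real_toNNReal]
  have heq : (fun x : ℝ => ((gaussianPDFReal 0 1 x).toNNReal : ℝ≥0) • Real.exp (t * x ^ 2))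
      = fun x => (Real.sqrt (2 * Real.pi))⁻¹ * Real.exp (-(1/2 - t) * x ^ 2) := by
    ext x
    rw [NNReal.smul_def, smul_eq_mul, Real.coe_toNNReal _ (gaussianPDFReal_nonneg _ _ _),
      gaussianPDFReal]
    push_cast
    rw [mul_assoc, ← Real.exp_add]
    ring_nf
  rw [heq, integral_const_mul, integral_gaussian]
  have h1 : (0:ℝ) < 1/2 - t := by linarith
  have h2 : (1:ℝ) - 2 * t = 2 * (1/2 - t) := by ring
  rw [h2, Real.sqrt_mul (by norm_num : (0:ℝ) ≤ 2), Real.sqrt_mul (by norm_num : (0:ℝ) ≤ 2),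
    Real.sqrt_div Real.pi_pos.le]
  have hπ : (0:ℝ) < Real.sqrt Real.pi := Real.sqrt_pos.mpr Real.pi_pos
  have h3 : (0:ℝ) < Real.sqrt (1/2 - t) := Real.sqrt_pos.mpr h1
  have h4 : (0:ℝ) < Real.sqrt 2 := by positivity
  field_simp

lemma lm_pi_integrable {p : ℕ} {f : ℝ → ℝ} (hf : Integrable f (gaussianReal 0 1)) :
    Integrable (fun g : Fin p → ℝ => ∏ i, f (g i))
      (Measure.pi fun _ : Fin p => gaussianReal 0 1) := by
  letI : MeasureSpace ℝ := ⟨gaussianReal 0 1⟩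
  haveI : SigmaFinite (volume : Measure ℝ) :=
    inferInstanceAs (SigmaFinite (gaussianReal 0 1))
  have hv : (Measure.pi fun _ : Fin p => gaussianReal 0 1)
      = (volume : Measure (Fin p → ℝ)) := (volume_pi).symm
  rw [hv]
  exact Integrable.fintype_prod (f := fun _ : Fin p => f) (fun _ => hf)

lemma lm_pi_integral {p : ℕ} (f : ℝ → ℝ) :
    ∫ g : Fin p → ℝ, ∏ i, f (g i) ∂(Measure.pi fun _ : Fin p => gaussianReal 0 1)
      = (∫ y, f y ∂(gaussianReal 0 1)) ^ p := by
  letI : MeasureSpace ℝ := ⟨gaussianReal 0 1⟩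
  haveI : SigmaFinite (volume : Measure ℝ) :=
    inferInstanceAs (SigmaFinite (gaussianReal 0 1))
  have hv : (Measure.pi fun _ : Fin p => gaussianReal 0 1)
      = (volume : Measure (Fin p → ℝ)) := (volume_pi).symm
  rw [hv]
  have : (∫ x : Fin p → ℝ, ∏ i, f (x i) ∂Measure.pi fun _ => gaussianReal 0 1)
      = (∫ x, f x ∂gaussianReal 0 1) ^ Fintype.card (Fin p) :=
    MeasureTheory.integral_fintype_prod_eq_pow f
  rwa [Fintype.card_fin] at this

/-- Laurent–Massart tail bound. If `X/σ² ~ χ²_p` then for every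
`x > 0`, `P(X ≥ σ²·p·(1 + 2√(x/p) + 2x/p)) ≤ e^{-x}`. -/
theorem laurent_massart_tail {Ω : Type*} [MeasurableSpace Ω]
    (P : Measure Ω) [IsProbabilityMeasure P]
    (p : ℕ) (hp : 0 < p) (σ : ℝ) (hσ : 0 < σ)
    (X : Ω → ℝ) (hXm : Measurable X)
    (hX : Measure.map (fun ω => X ω / σ ^ 2) P = chiSquared p)
    (x : ℝ) (hx : 0 < x) :
    P {ω | σ ^ 2 * p * (1 + 2 * Real.sqrt (x / p) + 2 * x / p) ≤ X ω} ≤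
      ENNReal.ofReal (Real.exp (-x)) := by
  have hp' : (0:ℝ) < p := Nat.cast_pos.mpr hp
  set r : ℝ := Real.sqrt (x / p) with hrdef
  have hr : 0 < r := Real.sqrt_pos.mpr (div_pos hx hp')
  have hr2 : r ^ 2 = x / p := Real.sq_sqrt (div_pos hx hp').le
  have hxr : x = p * r ^ 2 := by rw [hr2]; field_simp
  set t : ℝ := r / (1 + 2 * r) with htdef
  have h12r : (0:ℝ) < 1 + 2 * r := by linarith
  have ht0 : 0 < t := div_pos hr h12r
  have ht : t < 1/2 := by rw [htdef, div_lt_iff₀ h12r]; linarith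
  have h1_2t : 1 - 2 * t = (1 + 2 * r)⁻¹ := by
    rw [htdef]; field_simp; ring
  set a : ℝ := p * (1 + 2 * r + 2 * x / p) with hadef
  have ha2 : a = p * (1 + 2 * r + 2 * r ^ 2) := by
    rw [hadef, hxr]; field_simp
  -- reduce to the chi-squared measure
  set ν : Measure (Fin p → ℝ) := Measure.pi fun _ : Fin p => gaussianReal 0 1 with hν
  set S : (Fin p → ℝ) → ℝ := fun g => ∑ i, (g i) ^ 2 with hS
  have hSm : Measurable S := by
    apply Finset.measurable_sum
    exact fun i _ => (measurable_pi_apply i).pow_const 2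
  have hset : {ω | σ ^ 2 * p * (1 + 2 * Real.sqrt (x / p) + 2 * x / p) ≤ X ω}
      = (fun ω => X ω / σ ^ 2) ⁻¹' (Set.Ici a) := by
    ext ω
    simp only [Set.mem_setOf_eq, Set.mem_preimage, Set.mem_Ici, ← hrdef]
    rw [le_div_iff₀ (by positivity : (0:ℝ) < σ ^ 2), hadef]
    constructor <;> intro h <;> nlinarith
  have hmap : P {ω | σ ^ 2 * p * (1 + 2 * Real.sqrt (x / p) + 2 * x / p) ≤ X ω}
      = ν {g | a ≤ S g} := by
    rw [hset, ← Measure.map_apply (hXm.div_const _) measurableSet_Ici, hX, chiSquared,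
      Measure.map_apply hSm measurableSet_Ici]
    rfl
  rw [hmap]
  -- Chernoff bound
  haveI : IsProbabilityMeasure ν := by rw [hν]; infer_instance
  have hprodeq : (fun g : Fin p → ℝ => Real.exp (t * S g))
      = fun g => ∏ i, Real.exp (t * (g i) ^ 2) := by
    ext g
    rw [hS, Finset.mul_sum, Real.exp_sum]
  have hint : Integrable (fun g => Real.exp (t * S g)) ν := by
    rw [hprodeq, hν]
    exact lm_pi_integrable (lm_gauss_integrable ht)
  have hmgf : mgf S ν t = ((Real.sqrt (1 - 2 * t))⁻¹) ^ p := by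
    rw [mgf, hprodeq, hν, lm_pi_integral (fun y => Real.exp (t * y ^ 2)), lm_gauss_integral ht]
  have hchern := measure_ge_le_exp_mul_mgf (μ := ν) (X := S) a ht0.le hint
  rw [hmgf] at hchern
  -- the real-number estimate
  have h1_2t' : (0:ℝ) < 1 - 2 * t := by linarith
  have hsqrt_inv : (Real.sqrt (1 - 2 * t))⁻¹ = Real.sqrt (1 + 2 * r) := by
    rw [h1_2t, Real.sqrt_inv, inv_inv]
  have hlog : Real.log (1 + 2 * r) ≤ 2 * r * (1 + r) / (1 + 2 * r) := by
    have h := lm_log_le (y := 1 + 2 * r) (by linarith)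
    have heq : ((1 + 2 * r) - (1 + 2 * r)⁻¹) / 2 = 2 * r * (1 + r) / (1 + 2 * r) := by
      field_simp
      ring
    linarith [heq ▸ h]
  have hta : t * a - x = p * (2 * r * (1 + r) / (1 + 2 * r)) / 2 := by
    rw [ha2, hxr, htdef]
    field_simp
    ring
  have hpow : (Real.sqrt (1 + 2 * r)) ^ p ≤ Real.exp (t * a - x) := by
    rw [Real.sqrt_eq_rpow, ← Real.rpow_natCast ((1 + 2*r) ^ (1/2 : ℝ)) p,
      ← Real.rpow_mul h12r.le, Real.rpow_def_of_pos h12r, hta]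
    apply Real.exp_le_exp.mpr
    have hp2 : (0:ℝ) ≤ (p:ℝ) / 2 := by positivity
    calc Real.log (1 + 2 * r) * (1 / 2 * (p:ℝ))
        ≤ 2 * r * (1 + r) / (1 + 2 * r) * (1 / 2 * (p:ℝ)) := by
          apply mul_le_mul_of_nonneg_right hlog (by positivity)
      _ = (p:ℝ) * (2 * r * (1 + r) / (1 + 2 * r)) / 2 := by ring
  have hreal : Real.exp (-t * a) * ((Real.sqrt (1 - 2 * t))⁻¹) ^ p ≤ Real.exp (-x) := by
    rw [hsqrt_inv]
    calc Real.exp (-t * a) * (Real.sqrt (1 + 2 * r)) ^ p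
        ≤ Real.exp (-t * a) * Real.exp (t * a - x) :=
          mul_le_mul_of_nonneg_left hpow (Real.exp_pos _).le
      _ = Real.exp (-x) := by rw [← Real.exp_add]; ring_nf
  -- conclude in ℝ≥0∞
  have hfin : ν {g | a ≤ S g} ≠ ⊤ := measure_ne_top _ _
  rw [← ENNReal.ofReal_toReal hfin]
  exact ENNReal.ofReal_le_ofReal (le_trans hchern hreal)
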